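/- Let M be a bounded complex of graded k[h]-modules (deg h > 0) whose cohomology modules all have grading bounded below. If M ⊗^L_{k[h]} k₀ has cohomology concentrated in a single degree, then M has cohomology concentrated in that same degree. -/
import Mathlib


/-- **Graded Nakayama for complexes, part 2.** Let `M` be a bounded complex of graded
`k[h]`-modules (`deg h = 2 > 0`) whose cohomology modules `H i` are graded with grading
bounded below.  Over the PID `k[h]` the complex splits as the sum of its shifted
cohomologies, and `H^i(M ⊗^L_{k[h]} k₀) ≅ (H i)/h(H i) ⊕ Tor₁^{k[h]}(k₀, H (i+1))`.
If `M ⊗^L_{k[h]} k₀` has cohomology concentrated in the single degree `n` — i.e.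
`(H i)/h(H i) = 0` for `i ≠ n` and the `h`-torsion `Tor₁(k₀, H i)` vanishes for
`i ≠ n + 1` — then the cohomology of `M` is concentrated in degree `n`. -/
theorem graded_nakayama_complexes_concentrated
    {k : Type*} [Field k] (n : ℤ)
    (H : ℤ → Type*) [∀ i, AddCommGroup (H i)] [∀ i, Module (Polynomial k) (H i)]
    [∀ i, Module k (H i)] [∀ i, IsScalarTower k (Polynomial k) (H i)]
    (ℳ : ∀ i : ℤ, ℤ → Submodule k (H i))
    (hind : ∀ i, iSupIndep (ℳ i))
    (hsup : ∀ i, (⨆ j, ℳ i j) = ⊤)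
    (hdeg : ∀ i, ∀ j : ℤ, ∀ m ∈ ℳ i j, (Polynomial.X : Polynomial k) • m ∈ ℳ i (j + 2))
    (hbdd : ∀ i, ∃ m : ℤ, ∀ j < m, ℳ i j = ⊥)
    (hbounded : ∃ a b : ℤ, ∀ i : ℤ, (i < a ∨ b < i) → ∀ x : H i, x = 0)
    -- `M ⊗^L k₀` is concentrated in degree `n`:
    (hquot : ∀ i, i ≠ n → ∀ x : H i, ∃ y : H i, x = (Polynomial.X : Polynomial k) • y)
    (htor : ∀ i, i ≠ n + 1 → ∀ x : H i, (Polynomial.X : Polynomial k) • x = 0 → x = 0) :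
    ∀ i, i ≠ n → ∀ x : H i, x = 0 := by
  intro i hi
  obtain ⟨m, hm⟩ := hbdd i
  -- key: every graded piece vanishes
  have key : ∀ N : ℕ, ∀ j : ℤ, j < m + N → ∀ x ∈ ℳ i j, x = 0 := by
    intro N
    induction N with
    | zero =>
      intro j hj x hx
      simpa [hm j (by simpa using hj)] using hx
    | succ N ih =>
      intro j hj x hx
      obtain ⟨y, hy⟩ := hquot i hi x
      have hytop : y ∈ ⨆ l, ℳ i l := by rw [hsup i]; trivial
      obtain ⟨f, hf, hsum⟩ := (Submodule.mem_iSup_iff_exists_finsupp (ℳ i) y).mp hytop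
      -- x = ∑ X • f l, with X • f l ∈ ℳ i (l+2)
      have hx2 : x = f.sum fun l v => (Polynomial.X : Polynomial k) • v := by
        rw [hy, ← hsum, Finsupp.smul_sum]
      have hterm : ∀ l : ℤ, (Polynomial.X : Polynomial k) • f l ∈ ℳ i (l + 2) :=
        fun l => hdeg i l (f l) (hf l)
      -- separate the (j-2) term
      have hrest : x - (Polynomial.X : Polynomial k) • f (j - 2) ∈
          ⨆ (l) (_ : l ≠ j), ℳ i l := by
        classical
        have : x - (Polynomial.X : Polynomial k) • f (j - 2) =
            ∑ l ∈ f.support.erase (j - 2), (Polynomial.X : Polynomial k) • f l := by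
          rw [hx2]
          rw [Finsupp.sum]
          by_cases hmem : (j - 2) ∈ f.support
          · rw [← Finset.add_sum_erase _ _ hmem]; abel
          · rw [Finset.erase_eq_of_notMem hmem]
            have : f (j - 2) = 0 := Finsupp.notMem_support_iff.mp hmem
            rw [this, smul_zero, sub_zero]
        rw [this]
        refine Submodule.sum_mem _ ?_
        intro l hl
        have hlne : l + 2 ≠ j := by
          have := Finset.ne_of_mem_erase hl
          omega
        exact Submodule.mem_iSup_of_mem (l + 2) (Submodule.mem_iSup_of_mem hlne (hterm l))
      have hmemj : x - (Polynomial.X : Polynomial k) • f (j - 2) ∈ ℳ i j := by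
        have h1 : (Polynomial.X : Polynomial k) • f (j - 2) ∈ ℳ i j := by
          have := hdeg i (j - 2) (f (j - 2)) (hf (j - 2))
          simpa using this
        exact Submodule.sub_mem _ hx h1
      have hzero : x - (Polynomial.X : Polynomial k) • f (j - 2) = 0 :=
        Submodule.disjoint_def.mp (hind i j) _ hmemj hrest
      have hfz : f (j - 2) = 0 := ih (j - 2) (by omega) _ (hf (j - 2))
      rw [sub_eq_zero] at hzero
      rw [hzero, hfz, smul_zero]
  -- conclude all pieces vanish, hence everything
  have pieces : ∀ j : ℤ, ∀ x ∈ ℳ i j, x = 0 := by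
    intro j x hx
    refine key (j - m + 1).toNat j ?_ x hx
    have := Int.self_le_toNat (j - m + 1)
    omega
  intro x
  have hxtop : x ∈ ⨆ l, ℳ i l := by rw [hsup i]; trivial
  obtain ⟨f, hf, hsum⟩ := (Submodule.mem_iSup_iff_exists_finsupp (ℳ i) x).mp hxtop
  rw [← hsum]
  exact Finset.sum_eq_zero fun l _ => pieces l (f l) (hf l)
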